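/- Let p be a prime and let H and H' be finite graphs such that neither has an automorphism of order p. Suppose that for all finite graphs G, the number of homomorphisms from H to G is congruent to the number of homomorphisms from H' to G modulo p. Then H and H' are isomorphic. -/

import Mathlib

open Function Finset

namespace Stmt8Aux

variable {V V' W W₁ W₂ : Type*}

/-- Iterate of a graph endo-homomorphism. -/
def homIter {G : SimpleGraph W} (c : G →g G) : ℕ → (G →g G)
  | 0 => SimpleGraph.Hom.id
  | n + 1 => c.comp (homIter c n)

lemma homIter_coe {G : SimpleGraph W} (c : G →g G) (n : ℕ) :
    ⇑(homIter c n) = (⇑c)^[n] := by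
  induction n with
  | zero => rfl
  | succ n ih =>
    funext x
    simp [homIter, SimpleGraph.Hom.comp_apply, ih, Function.iterate_succ_apply']

/-- Two mutually surjective homs produce an isomorphism (with underlying map `f`). -/
lemma iso_of_surj [Finite V] [Finite V'] {H : SimpleGraph V} {H' : SimpleGraph V'}
    (f : H →g H') (g : H' →g H) (hf : Surjective ⇑f) (hg : Surjective ⇑g) :
    ∃ φ : H ≃g H', ⇑φ = ⇑f := by
  classical
  set c : H →g H := g.comp f with hc
  have hcs : Surjective ⇑c := hg.comp hf
  have hcb : Bijective ⇑c := Finite.surjective_iff_bijective.mp hcs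
  let e : Equiv.Perm V := Equiv.ofBijective _ hcb
  have hm : 0 < orderOf e := orderOf_pos e
  have hiter : ∀ n x, (e ^ n) x = (⇑c)^[n] x := by
    intro n
    induction n with
    | zero => intro x; rfl
    | succ n ih =>
      intro x
      rw [pow_succ, Equiv.Perm.mul_apply, Function.iterate_succ_apply]
      exact ih (c x)
  have hcm : ∀ x, (⇑c)^[orderOf e] x = x := by
    intro x
    rw [← hiter, pow_orderOf_eq_one]; rfl
  let finv : H' →g H := (homIter c (orderOf e - 1)).comp g
  have hleft : ∀ x, finv (f x) = x := by
    intro x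
    show (homIter c (orderOf e - 1)) (g (f x)) = x
    have h1 : g (f x) = c x := rfl
    rw [h1]
    have := congrFun (homIter_coe c (orderOf e - 1)) (c x)
    rw [this, ← Function.iterate_succ_apply, Nat.succ_eq_add_one,
      Nat.sub_add_cancel hm]
    exact hcm x
  have hright : ∀ y, f (finv y) = y := by
    intro y
    obtain ⟨x, rfl⟩ := hf y
    rw [hleft]
  refine ⟨⟨⟨⇑f, ⇑finv, hleft, hright⟩, ?_⟩, rfl⟩
  intro u v
  constructor
  · intro h
    have := finv.map_rel h
    simpa [hleft] using this
  · exact fun h => f.map_rel h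

/-- The automorphism group of a graph as a subgroup of permutations. -/
def autGroup (H : SimpleGraph V) : Subgroup (Equiv.Perm V) where
  carrier := {e | ∀ u v, H.Adj (e u) (e v) ↔ H.Adj u v}
  one_mem' := fun _ _ => Iff.rfl
  mul_mem' := by
    intro a b ha hb u v
    exact (ha _ _).trans (hb _ _)
  inv_mem' := by
    intro a ha u v
    rw [← ha (a⁻¹ u) (a⁻¹ v), ← Equiv.Perm.mul_apply, ← Equiv.Perm.mul_apply, mul_inv_cancel,
      Equiv.Perm.one_apply, Equiv.Perm.one_apply]

lemma mem_autGroup_iff {H : SimpleGraph V} {e : Equiv.Perm V} :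
    e ∈ autGroup H ↔ ∀ u v, H.Adj (e u) (e v) ↔ H.Adj u v := Iff.rfl

lemma card_aut [Finite V] (H : SimpleGraph V) :
    Nat.card {f : H →g H // Surjective ⇑f} = Nat.card (autGroup H) := by
  refine (Nat.card_congr (Equiv.ofBijective
    (fun e : autGroup H => (⟨⟨⇑(e : Equiv.Perm V), fun h => ((mem_autGroup_iff.mp e.2) _ _).mpr h⟩,
      (e : Equiv.Perm V).surjective⟩ : {f : H →g H // Surjective ⇑f})) ⟨?_, ?_⟩)).symm
  · intro e₁ e₂ h
    have h2 : ⇑(e₁ : Equiv.Perm V) = ⇑(e₂ : Equiv.Perm V) := by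
      have := congrArg (fun x : {f : H →g H // Surjective ⇑f} => (x.1 : V → V)) h
      exact this
    exact Subtype.ext (Equiv.coe_fn_injective h2)
  · rintro ⟨f, hf⟩
    obtain ⟨φ, hφ⟩ := iso_of_surj f f hf hf
    refine ⟨⟨φ.toEquiv, fun u v => ?_⟩, ?_⟩
    · exact φ.map_rel_iff'
    · apply Subtype.ext
      apply DFunLike.ext
      intro v
      exact congrFun hφ v

lemma aut_not_dvd [Finite V] (p : ℕ) (hp : p.Prime) (H : SimpleGraph V)
    (hH : ¬ ∃ e : Equiv.Perm V, (∀ u v, H.Adj (e u) (e v) ↔ H.Adj u v) ∧ orderOf e = p) :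
    ¬ p ∣ Nat.card (autGroup H) := by
  intro hdvd
  haveI : Fact p.Prime := ⟨hp⟩
  obtain ⟨x, hx⟩ := exists_prime_orderOf_dvd_card' p hdvd
  exact hH ⟨(x : Equiv.Perm V), x.2, by rw [Subgroup.orderOf_coe]; exact hx⟩


def homCongr {H : SimpleGraph V} {G₁ : SimpleGraph W₁} {G₂ : SimpleGraph W₂}
    (ψ : G₁ ≃g G₂) : (H →g G₁) ≃ (H →g G₂) where
  toFun f := ψ.toHom.comp f
  invFun f := ψ.symm.toHom.comp f
  left_inv f := by ext v; simp
  right_inv f := by ext v; simp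

def restrictEquiv {H : SimpleGraph V} (G : SimpleGraph W) (s : Set W) :
    (H →g G.induce s) ≃ {f : H →g G // ∀ v, f v ∈ s} where
  toFun g := ⟨⟨fun v => ↑(g v), fun h => g.map_rel h⟩, fun v => (g v).2⟩
  invFun f := ⟨fun v => ⟨f.1 v, f.2 v⟩, fun h => f.1.map_rel h⟩
  left_inv g := by ext v : 2; rfl
  right_inv f := by apply Subtype.ext; ext v; rfl

lemma homFinite [Finite V] [Finite W] (H : SimpleGraph V) (G : SimpleGraph W) :
    Finite (H →g G) :=
  Finite.of_injective (fun f => (f : V → W)) DFunLike.coe_injective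

/-- Inclusion–exclusion: the number of vertex-surjective homomorphisms as an
alternating sum of homomorphism counts into induced subgraphs. -/
lemma key [Fintype V] [Fintype W] [DecidableEq W] (H : SimpleGraph V) (G : SimpleGraph W) :
    (Nat.card {f : H →g G // Surjective ⇑f} : ℤ)
      = ∑ s : Finset W, (-1 : ℤ) ^ (sᶜ.card) * (Nat.card (H →g G.induce ↑s) : ℤ) := by
  classical
  haveI : Fintype (H →g G) := Fintype.ofFinite _
  have hcard : ∀ s : Finset W, (Nat.card (H →g G.induce ↑s) : ℤ)
      = ∑ f : H →g G, (if ∀ v, f v ∈ s then (1 : ℤ) else 0) := by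
    intro s
    rw [Nat.card_congr (restrictEquiv G ↑s), Nat.card_eq_fintype_card,
      Fintype.card_subtype]
    push_cast [Finset.card_filter]
    rfl
  calc (Nat.card {f : H →g G // Surjective ⇑f} : ℤ)
      = ∑ f : H →g G, (if Surjective ⇑f then (1 : ℤ) else 0) := by
        rw [Nat.card_eq_fintype_card, Fintype.card_subtype]
        push_cast [Finset.card_filter]
        rfl
    _ = ∑ f : H →g G, ∑ s : Finset W,
          (-1 : ℤ) ^ (sᶜ.card) * (if ∀ v, f v ∈ s then (1 : ℤ) else 0) := by
        refine Finset.sum_congr rfl fun f _ => ?_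
        have himg : ∀ s : Finset W, (∀ v, f v ∈ s) ↔ Finset.univ.image ⇑f ⊆ s := by
          intro s
          rw [Finset.image_subset_iff]
          simp
        have hsurj : Surjective ⇑f ↔ (Finset.univ.image ⇑f)ᶜ = ∅ := by
          rw [Finset.compl_eq_empty_iff, Finset.eq_univ_iff_forall]
          simp [Function.Surjective, eq_comm]
        calc (if Surjective ⇑f then (1 : ℤ) else 0)
            = ∑ u ∈ ((Finset.univ.image ⇑f)ᶜ).powerset, (-1 : ℤ) ^ u.card := by
              rw [Finset.sum_powerset_neg_one_pow_card]
              simp [hsurj]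
          _ = ∑ s ∈ Finset.univ.filter (fun s : Finset W => Finset.univ.image ⇑f ⊆ s),
                (-1 : ℤ) ^ (sᶜ.card) := by
              refine Finset.sum_nbij' (fun u => uᶜ) (fun s => sᶜ) ?_ ?_ ?_ ?_ ?_
              · intro u hu
                simp only [Finset.mem_filter, Finset.mem_univ, true_and]
                rw [← Finset.compl_subset_compl, compl_compl]
                exact Finset.mem_powerset.mp hu
              · intro s hs
                simp only [Finset.mem_filter, Finset.mem_univ, true_and] at hs
                exact Finset.mem_powerset.mpr (Finset.compl_subset_compl.mpr hs)
              · intro u _; exact compl_compl u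
              · intro s _; exact compl_compl s
              · intro u _; rw [compl_compl]
          _ = ∑ s : Finset W, (-1 : ℤ) ^ (sᶜ.card) * (if ∀ v, f v ∈ s then (1 : ℤ) else 0) := by
              rw [Finset.sum_filter]
              refine Finset.sum_congr rfl fun s _ => ?_
              by_cases h : Finset.univ.image ⇑f ⊆ s
              · rw [if_pos h, if_pos ((himg s).mpr h)]; ring
              · rw [if_neg h, if_neg (fun hh => h ((himg s).mp hh))]; ring
    _ = ∑ s : Finset W, (-1 : ℤ) ^ (sᶜ.card) * (Nat.card (H →g G.induce ↑s) : ℤ) := by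
        rw [Finset.sum_comm]
        refine Finset.sum_congr rfl fun s _ => ?_
        rw [hcard s, Finset.mul_sum]


lemma hom_card_cong (p : ℕ) [Fintype V] [Fintype V'] (H : SimpleGraph V) (H' : SimpleGraph V')
    (hcong : ∀ (n : ℕ) (G : SimpleGraph (Fin n)),
      Nat.card (H →g G) ≡ Nat.card (H' →g G) [MOD p])
    [Fintype W] (G : SimpleGraph W) :
    Nat.card (H →g G) ≡ Nat.card (H' →g G) [MOD p] := by
  classical
  let e : Fin (Fintype.card W) ≃ W := (Fintype.equivFin W).symm
  let G₀ : SimpleGraph (Fin (Fintype.card W)) := G.comap ⇑e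
  have ψ : G₀ ≃g G := ⟨e, Iff.rfl⟩
  have h1 : Nat.card (H →g G) = Nat.card (H →g G₀) := (Nat.card_congr (homCongr ψ)).symm
  have h2 : Nat.card (H' →g G) = Nat.card (H' →g G₀) := (Nat.card_congr (homCongr ψ)).symm
  rw [h1, h2]
  exact hcong _ G₀

set_option maxHeartbeats 1000000 in
lemma surj_card_cong (p : ℕ) [Fintype V] [Fintype V'] (H : SimpleGraph V) (H' : SimpleGraph V')
    (hcong : ∀ (n : ℕ) (G : SimpleGraph (Fin n)),
      Nat.card (H →g G) ≡ Nat.card (H' →g G) [MOD p])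
    [Fintype W] (G : SimpleGraph W) :
    ((Nat.card {f : H →g G // Surjective ⇑f} : ℕ) : ZMod p)
      = ((Nat.card {f : H' →g G // Surjective ⇑f} : ℕ) : ZMod p) := by
  classical
  have k1 := key H G
  have k2 := key H' G
  have hterm : ∀ s : Finset W, ((Nat.card (H →g G.induce ↑s) : ℕ) : ZMod p)
      = ((Nat.card (H' →g G.induce ↑s) : ℕ) : ZMod p) := by
    intro s
    rw [ZMod.natCast_eq_natCast_iff]
    exact hom_card_cong p H H' hcong (G.induce ↑s)
  have c1 := congrArg (fun z : ℤ => (z : ZMod p)) k1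
  have c2 := congrArg (fun z : ℤ => (z : ZMod p)) k2
  push_cast at c1 c2
  rw [c1, c2]
  exact Finset.sum_congr rfl fun s _ => by rw [hterm s]

end Stmt8Aux

theorem stmt8 (p : ℕ) (hp : p.Prime) {V V' : Type*} [Fintype V] [Fintype V']
    (H : SimpleGraph V) (H' : SimpleGraph V')
    (hH : ¬ ∃ e : Equiv.Perm V, (∀ u v, H.Adj (e u) (e v) ↔ H.Adj u v) ∧ orderOf e = p)
    (hH' : ¬ ∃ e : Equiv.Perm V', (∀ u v, H'.Adj (e u) (e v) ↔ H'.Adj u v) ∧ orderOf e = p)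
    (hcong : ∀ (n : ℕ) (G : SimpleGraph (Fin n)),
      Nat.card (H →g G) ≡ Nat.card (H' →g G) [MOD p]) :
    Nonempty (H ≃g H') := by
  classical
  haveI : NeZero p := ⟨hp.ne_zero⟩
  have hA : ¬ (p ∣ Nat.card {f : H →g H // Surjective ⇑f}) := by
    rw [Stmt8Aux.card_aut]
    exact Stmt8Aux.aut_not_dvd p hp H hH
  have hA' : ¬ (p ∣ Nat.card {f : H' →g H' // Surjective ⇑f}) := by
    rw [Stmt8Aux.card_aut]
    exact Stmt8Aux.aut_not_dvd p hp H' hH'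
  have e1 := Stmt8Aux.surj_card_cong p H H' hcong H
  have e2 := Stmt8Aux.surj_card_cong p H H' hcong H'
  have n1 : Nat.card {f : H' →g H // Surjective ⇑f} ≠ 0 := by
    intro h0
    apply hA
    rw [← ZMod.natCast_eq_zero_iff, e1, h0]
    simp
  have n2 : Nat.card {f : H →g H' // Surjective ⇑f} ≠ 0 := by
    intro h0
    apply hA'
    rw [← ZMod.natCast_eq_zero_iff, ← e2, h0]
    simp
  have hne1 : Nonempty {f : H' →g H // Surjective ⇑f} := by
    by_contra hne
    haveI := not_nonempty_iff.mp hne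
    exact n1 Nat.card_of_isEmpty
  have hne2 : Nonempty {f : H →g H' // Surjective ⇑f} := by
    by_contra hne
    haveI := not_nonempty_iff.mp hne
    exact n2 Nat.card_of_isEmpty
  obtain ⟨⟨f, hf⟩⟩ := hne1
  obtain ⟨⟨g, hg⟩⟩ := hne2
  obtain ⟨φ, -⟩ := Stmt8Aux.iso_of_surj g f hg hf
  exact ⟨φ⟩
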